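/- If R M Q_F = [[A,B],[0,C]] is an F-decomposition of an ACI-matrix M (zero block Big, A FRmR, C FCmR), and P M Q_F = [[A',B'],[0,C']] is another block decomposition with the same column split in which P is a permutation matrix and A' has linearly independent rows, then the second decomposition is also an F-decomposition: its zero block is Big, A' is FRmR, and C' is FCmR. The analogous statement holds with 'semifactor set', 'Medium zero block' in place of 'factor set', 'Big zero block'. -/

import Mathlib

open MvPolynomial

/-- An ACI-matrix over a field `K`: entries are polynomials of total degree at most one
in indeterminates indexed by `ι`, and no indeterminate appears in two different columns. -/
structure ACIMatrix (K : Type) [Field K] (ι : Type) (m n : ℕ) where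
  entry : Matrix (Fin m) (Fin n) (MvPolynomial ι K)
  deg_le : ∀ i j, (entry i j).totalDegree ≤ 1
  colIndep : ∀ (x : ι) (i i' : Fin m) (j j' : Fin n),
      x ∈ (entry i j).vars → x ∈ (entry i' j').vars → j = j'

namespace ACIMatrix

variable {K : Type} [Field K] {ι : Type} {m n m' n' : ℕ}

/-- The constant matrix obtained by assigning values in `K` to all indeterminates. -/
noncomputable def completion (M : ACIMatrix K ι m n) (v : ι → K) : Matrix (Fin m) (Fin n) K :=
  fun i j => eval v (M.entry i j)

/-- The maximum rank of a completion of `M`. -/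
noncomputable def maxRank (M : ACIMatrix K ι m n) : ℕ :=
  sSup {r | ∃ v : ι → K, (M.completion v).rank = r}

/-- Full row maxRank. -/
def FRmR (M : ACIMatrix K ι m n) : Prop := M.maxRank = m

/-- Full column maxRank. -/
def FCmR (M : ACIMatrix K ι m n) : Prop := M.maxRank = n

/-- Full maxRank: some completion has full rank. -/
def FmR (M : ACIMatrix K ι m n) : Prop := M.maxRank = min m n

/-- A submatrix (with injective column selection) of an ACI-matrix is an ACI-matrix. -/
def subm (M : ACIMatrix K ι m n) (f : Fin m' → Fin m) (g : Fin n' → Fin n)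
    (hg : Function.Injective g) : ACIMatrix K ι m' n' where
  entry := M.entry.submatrix f g
  deg_le := fun i j => M.deg_le _ _
  colIndep := fun x i i' j j' h h' => hg (M.colIndep x _ _ _ _ h h')

/-- The contiguous block of size `p × q` whose top-left corner is at row `r`, column `c`. -/
def block (M : ACIMatrix K ι m n) (r c p q : ℕ) (hr : r + p ≤ m) (hc : c + q ≤ n) :
    ACIMatrix K ι p q :=
  M.subm (fun i => ⟨r + i.val, by omega⟩) (fun j => ⟨c + j.val, by omega⟩)
    (fun a b hab => Fin.ext (by
      have h : c + (a : ℕ) = c + (b : ℕ) := congrArg Fin.val hab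
      omega))

/-- `M'` is equivalent to `M`:  `M' = R M Q` for a nonsingular constant matrix `R`
and a permutation `Q` of the columns. -/
def MEquiv (M M' : ACIMatrix K ι m n) : Prop :=
  ∃ (R : Matrix (Fin m) (Fin m) K) (σ : Equiv.Perm (Fin n)),
    IsUnit R ∧ M'.entry = ((R.map MvPolynomial.C) * M.entry).submatrix id ⇑σ

/-- Transport an ACI-matrix along equalities of its dimensions. -/
def castSize (h : m = m') (h' : n = n') (M : ACIMatrix K ι m n) : ACIMatrix K ι m' n' :=
  M.subm (Fin.cast h.symm) (Fin.cast h'.symm)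
    (fun a b hab => Fin.ext (by simpa using congrArg Fin.val hab))

theorem card_le_n {n : ℕ} (Fs : Finset (Fin n)) : Fs.card ≤ n :=
  (Finset.card_le_univ Fs).trans_eq (Finset.card_fin n)

/-- `Fs` is a factor set of `M`: some `R M Q_Fs = [[A,B],[0,C]]` with a Big zero block,
`A` (on the columns of `Fs`) FRmR and `C` FCmR. -/
def IsFactorSet (M : ACIMatrix K ι m n) (Fs : Finset (Fin n)) : Prop :=
  ∃ (R : Matrix (Fin m) (Fin m) K) (σ : Equiv.Perm (Fin n)) (N : ACIMatrix K ι m n)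
    (r : ℕ) (hr : r ≤ m),
    IsUnit R ∧
    (∀ j : Fin n, j ∈ Fs ↔ (σ j).val < Fs.card) ∧
    N.entry = ((R.map MvPolynomial.C) * M.entry).submatrix id ⇑σ.symm ∧
    (∀ (i : Fin m) (j : Fin n), m - r ≤ i.val → j.val < Fs.card → N.entry i j = 0) ∧
    r + Fs.card > max m n ∧
    (N.block 0 0 (m - r) Fs.card (by omega) (by have := card_le_n Fs; omega)).FRmR ∧
    (N.block (m - r) Fs.card r (n - Fs.card) (by omega)
      (by have := card_le_n Fs; omega)).FCmR

/-- `Fs` is a semifactor set of `M`: as a factor set but with a Medium zero block. -/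
def IsSemifactorSet (M : ACIMatrix K ι m n) (Fs : Finset (Fin n)) : Prop :=
  ∃ (R : Matrix (Fin m) (Fin m) K) (σ : Equiv.Perm (Fin n)) (N : ACIMatrix K ι m n)
    (r : ℕ) (hr : r ≤ m),
    IsUnit R ∧
    (∀ j : Fin n, j ∈ Fs ↔ (σ j).val < Fs.card) ∧
    N.entry = ((R.map MvPolynomial.C) * M.entry).submatrix id ⇑σ.symm ∧
    (∀ (i : Fin m) (j : Fin n), m - r ≤ i.val → j.val < Fs.card → N.entry i j = 0) ∧
    r + Fs.card = max m n ∧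
    (N.block 0 0 (m - r) Fs.card (by omega) (by have := card_le_n Fs; omega)).FRmR ∧
    (N.block (m - r) Fs.card r (n - Fs.card) (by omega)
      (by have := card_le_n Fs; omega)).FCmR

end ACIMatrix
section Helpers

open ACIMatrix

variable {K : Type} [Field K] {ι : Type}

lemma sum_split {A : Type*} [AddCommMonoid A] {a b N : ℕ} (h : a + b = N) (f : Fin N → A) :
    ∑ l, f l = (∑ i : Fin a, f ⟨i.val, by omega⟩) + ∑ j : Fin b, f ⟨a + j.val, by omega⟩ := by
  rw [← Equiv.sum_comp (finCongr h) f, Fin.sum_univ_add]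
  congr 1 <;> exact Finset.sum_congr rfl fun x _ => by congr 1

lemma rank_bddAbove {m n : ℕ} (M : ACIMatrix K ι m n) :
    BddAbove {r | ∃ v : ι → K, (M.completion v).rank = r} := by
  refine ⟨m, fun x hx => ?_⟩
  obtain ⟨w, hw⟩ := hx
  exact hw ▸ (M.completion w).rank_le_height

lemma completion_rank_le {m n : ℕ} (M : ACIMatrix K ι m n) (v : ι → K) :
    (M.completion v).rank ≤ M.maxRank := by
  have hmem : (M.completion v).rank ∈ {r | ∃ w : ι → K, (M.completion w).rank = r} := ⟨v, rfl⟩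
  exact le_csSup (rank_bddAbove M) hmem

lemma exists_completion_rank {m n : ℕ} (M : ACIMatrix K ι m n) :
    ∃ v : ι → K, (M.completion v).rank = M.maxRank := by
  have h := Nat.sSup_mem (s := {r | ∃ v : ι → K, (M.completion v).rank = r})
    ⟨(M.completion (fun _ => 0)).rank, ⟨fun _ => 0, rfl⟩⟩ (rank_bddAbove M)
  exact h

lemma maxRank_transfer {p q : ℕ} (X Y : ACIMatrix K ι p q) (U : Matrix (Fin p) (Fin p) K)
    (hU : IsUnit U) (ρ : Equiv.Perm (Fin q))
    (h : ∀ i j, Y.entry i j = ∑ l, MvPolynomial.C (U i l) * X.entry l (ρ j)) :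
    Y.maxRank = X.maxRank := by
  classical
  have hrank : ∀ v, (Y.completion v).rank = (X.completion v).rank := by
    intro v
    have hc : Y.completion v = U * (X.completion v).submatrix id ⇑ρ := by
      ext i j
      simp only [ACIMatrix.completion, h, map_sum, Matrix.mul_apply, Matrix.submatrix_apply, id]
      exact Finset.sum_congr rfl fun l _ => by rw [map_mul, MvPolynomial.eval_C]
    have hP : ((1 : Matrix (Fin q) (Fin q) K).submatrix ⇑ρ.symm id) *
        ((1 : Matrix (Fin q) (Fin q) K).submatrix ⇑ρ id) = 1 := by
      rw [Matrix.mul_submatrix_one, Matrix.submatrix_submatrix]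
      simp
    have hPu : IsUnit ((1 : Matrix (Fin q) (Fin q) K).submatrix ⇑ρ.symm id) :=
      ⟨⟨_, _, hP, (mul_eq_one_comm).mp hP⟩, rfl⟩
    have hperm : (X.completion v).submatrix id ⇑ρ =
        X.completion v * ((1 : Matrix (Fin q) (Fin q) K).submatrix ⇑ρ.symm id) := by
      rw [Matrix.mul_submatrix_one]
      simp
    rw [hc, Matrix.rank_mul_eq_right_of_isUnit_det _ _ ((Matrix.isUnit_iff_isUnit_det _).mp hU),
      hperm, Matrix.rank_mul_eq_left_of_isUnit_det _ _ ((Matrix.isUnit_iff_isUnit_det _).mp hPu)]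
  unfold ACIMatrix.maxRank
  congr 1
  ext x
  exact ⟨fun ⟨v, hv⟩ => ⟨v, by rw [← hrank v]; exact hv⟩,
    fun ⟨v, hv⟩ => ⟨v, by rw [hrank v]; exact hv⟩⟩

lemma FRmR_rows_li {p q : ℕ} (X : ACIMatrix K ι p q) (h : X.FRmR) :
    LinearIndependent K (fun i : Fin p => fun j : Fin q => X.entry i j) := by
  obtain ⟨v, hv⟩ := exists_completion_rank X
  rw [show X.maxRank = p from h] at hv
  have hli : LinearIndependent K (X.completion v).row := by
    apply linearIndependent_iff_card_le_finrank_span.mpr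
    rw [Set.finrank, ← Matrix.rank_eq_finrank_span_row, hv, Fintype.card_fin]
  rw [Fintype.linearIndependent_iff] at hli ⊢
  intro g hg
  apply hli g
  funext j
  have h1 : ∑ i, g i • X.entry i j = 0 := by
    have := congrFun hg j
    simpa [Finset.sum_apply] using this
  have h2 := congrArg (MvPolynomial.eval v) h1
  simpa [MvPolynomial.smul_eq_C_mul, map_sum, ACIMatrix.completion, Finset.sum_apply]
    using h2

lemma unit_zero_block {m p q : ℕ} (S : Matrix (Fin m) (Fin m) K) (hS : IsUnit S)
    (hp : p ≤ m) (hq : q ≤ m)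
    (h0 : ∀ i l : Fin m, m - p ≤ i.val → l.val < q → S i l = 0) : p + q ≤ m := by
  have hrows : LinearIndependent K (fun i : Fin m => S i) :=
    Matrix.linearIndependent_rows_iff_isUnit.mpr hS
  rw [Fintype.linearIndependent_iff] at hrows
  have hw : LinearIndependent K (fun i : Fin p => fun j : Fin (m - q) =>
      S ⟨m - p + i.val, by omega⟩ ⟨q + j.val, by omega⟩) := by
    rw [Fintype.linearIndependent_iff]
    intro g hg
    set g' : Fin m → K := fun l => if h : m - p ≤ l.val then g ⟨l.val - (m - p), by omega⟩ else 0
      with hg'def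
    have key : ∀ l, g' l = 0 := by
      apply hrows
      funext c
      rw [Finset.sum_apply,
        sum_split (show (m - p) + p = m from by omega) (fun l => (g' l • S l) c)]
      have e1 : ∀ x : Fin (m - p), (g' ⟨x.val, by omega⟩ • S ⟨x.val, by omega⟩) c = 0 := by
        intro x
        have : g' ⟨x.val, by omega⟩ = 0 := by
          simp only [hg'def]
          exact dif_neg (show ¬ (m - p ≤ x.val) by omega)
        simp [this]
      rw [Finset.sum_congr rfl (fun x _ => e1 x), Finset.sum_const_zero, zero_add]
      have e2 : ∀ x : Fin p, (g' ⟨m - p + x.val, by omega⟩ • S ⟨m - p + x.val, by omega⟩) c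
          = g x * S ⟨m - p + x.val, by omega⟩ c := by
        intro x
        have : g' ⟨m - p + x.val, by omega⟩ = g x := by
          simp only [hg'def]
          rw [dif_pos (show m - p ≤ m - p + x.val by omega)]
          exact congrArg g (Fin.ext (show m - p + x.val - (m - p) = x.val by omega))
        simp [this]
      rw [Finset.sum_congr rfl (fun x _ => e2 x)]
      by_cases hc : c.val < q
      · have : ∀ x : Fin p, g x * S ⟨m - p + x.val, by omega⟩ c = 0 := fun x => by
          rw [h0 ⟨m - p + x.val, by omega⟩ c (show m - p ≤ m - p + x.val by omega) hc, mul_zero]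
        simp [Finset.sum_congr rfl (fun x _ => this x)]
      · have hcc : c = ⟨q + (c.val - q), by omega⟩ :=
          Fin.ext (show c.val = q + (c.val - q) by omega)
        have := congrFun hg ⟨c.val - q, by omega⟩
        simp only [Finset.sum_apply, Pi.smul_apply, smul_eq_mul, Pi.zero_apply] at this
        rw [hcc]
        exact this
    intro i
    have h1 := key ⟨m - p + i.val, by omega⟩
    simp only [hg'def] at h1
    rw [dif_pos (show m - p ≤ m - p + i.val by omega)] at h1
    rw [show (⟨m - p + i.val - (m - p), by omega⟩ : Fin p) = i
      from Fin.ext (show m - p + i.val - (m - p) = i.val by omega)] at h1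
    exact h1
  have hcard := hw.fintype_card_le_finrank
  rw [Module.finrank_fin_fun, Fintype.card_fin] at hcard
  omega

lemma core_zero {m n k r1 r2 : ℕ} (hk : k ≤ n) (hr1 : r1 ≤ m) (hr2 : r2 ≤ m)
    (N1 N2 : ACIMatrix K ι m n) (S : Matrix (Fin m) (Fin m) K) (π : Equiv.Perm (Fin n))
    (hπ : ∀ j : Fin n, (π j).val < k ↔ j.val < k)
    (hrel : ∀ i j, N2.entry i j = ∑ l, MvPolynomial.C (S i l) * N1.entry l (π j))
    (hz1 : ∀ (i : Fin m) (j : Fin n), m - r1 ≤ i.val → j.val < k → N1.entry i j = 0)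
    (hz2 : ∀ (i : Fin m) (j : Fin n), m - r2 ≤ i.val → j.val < k → N2.entry i j = 0)
    (hA1 : LinearIndependent K (fun a : Fin (m - r1) => fun b : Fin k =>
      N1.entry ⟨a.val, by omega⟩ ⟨b.val, by omega⟩)) :
    ∀ i l : Fin m, m - r2 ≤ i.val → l.val < m - r1 → S i l = 0 := by
  intro i l hi hl
  rw [Fintype.linearIndependent_iff] at hA1
  have hsum : (∑ a : Fin (m - r1), S i ⟨a.val, by omega⟩ •
      (fun b : Fin k => N1.entry ⟨a.val, by omega⟩ ⟨b.val, by omega⟩)) = 0 := by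
    funext b
    simp only [Finset.sum_apply, Pi.smul_apply, MvPolynomial.smul_eq_C_mul, Pi.zero_apply]
    obtain ⟨j, hπj⟩ : ∃ j : Fin n, π j = ⟨b.val, by omega⟩ :=
      ⟨π.symm ⟨b.val, by omega⟩, Equiv.apply_symm_apply _ _⟩
    have hjk : j.val < k := (hπ j).mp (by rw [hπj]; exact b.isLt)
    have h0 : (0 : MvPolynomial ι K) = ∑ l', MvPolynomial.C (S i l') * N1.entry l' (π j) := by
      rw [← hrel i j]
      exact (hz2 i j hi hjk).symm
    rw [sum_split (show (m - r1) + r1 = m from by omega)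
      (fun l' => MvPolynomial.C (S i l') * N1.entry l' (π j))] at h0
    have e2 : ∀ x : Fin r1,
        MvPolynomial.C (S i ⟨m - r1 + x.val, by omega⟩) *
          N1.entry ⟨m - r1 + x.val, by omega⟩ (π j) = 0 := fun x => by
      rw [hz1 ⟨m - r1 + x.val, by omega⟩ (π j) (show m - r1 ≤ m - r1 + x.val by omega)
        (by rw [hπj]; exact b.isLt), mul_zero]
    rw [Finset.sum_congr rfl (fun x _ => e2 x), Finset.sum_const_zero, add_zero] at h0
    rw [hπj] at h0
    exact h0.symm
  exact hA1 (fun a => S i ⟨a.val, by omega⟩) hsum ⟨l.val, hl⟩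


lemma block_entry {m n : ℕ} (X : ACIMatrix K ι m n) (r0 c0 p q : ℕ)
    (hp : r0 + p ≤ m) (hq : c0 + q ≤ n) (a : Fin p) (b : Fin q) :
    (X.block r0 c0 p q hp hq).entry a b
      = X.entry ⟨r0 + a.val, by omega⟩ ⟨c0 + b.val, by omega⟩ := rfl

lemma mk_zero_add {m : ℕ} (v : ℕ) (h : 0 + v < m) :
    (⟨0 + v, h⟩ : Fin m) = ⟨v, by omega⟩ := Fin.ext (Nat.zero_add _)

set_option maxHeartbeats 4000000 in
lemma main_core {m n : ℕ} {M : ACIMatrix K ι m n} {Fs : Finset (Fin n)}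
    {τ : Equiv.Perm (Fin m)} {σ : Equiv.Perm (Fin n)} {N : ACIMatrix K ι m n}
    {r : ℕ} (hr : r ≤ m)
    (hσ : ∀ j : Fin n, j ∈ Fs ↔ (σ j).val < Fs.card)
    (hN : N.entry = M.entry.submatrix ⇑τ ⇑σ.symm)
    (hz : ∀ (i : Fin m) (j : Fin n), m - r ≤ i.val → j.val < Fs.card → N.entry i j = 0)
    (hA : LinearIndependent K (fun a : Fin (m - r) => fun b : Fin Fs.card =>
      N.entry ⟨a.val, by omega⟩ ⟨b.val, by have := ACIMatrix.card_le_n Fs; omega⟩))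
    {R : Matrix (Fin m) (Fin m) K} {σ' : Equiv.Perm (Fin n)} {N' : ACIMatrix K ι m n}
    {r' : ℕ} (hr' : r' ≤ m) (hRu : IsUnit R)
    (hσ' : ∀ j : Fin n, j ∈ Fs ↔ (σ' j).val < Fs.card)
    (hN' : N'.entry = ((R.map MvPolynomial.C) * M.entry).submatrix id ⇑σ'.symm)
    (hz' : ∀ (i : Fin m) (j : Fin n), m - r' ≤ i.val → j.val < Fs.card → N'.entry i j = 0)
    (hFR' : (N'.block 0 0 (m - r') Fs.card (by omega)
      (by have := ACIMatrix.card_le_n Fs; omega)).FRmR)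
    (hFC' : (N'.block (m - r') Fs.card r' (n - Fs.card) (by omega)
      (by have := ACIMatrix.card_le_n Fs; omega)).FCmR) :
    r = r' ∧
    (N.block 0 0 (m - r) Fs.card (by omega)
      (by have := ACIMatrix.card_le_n Fs; omega)).FRmR ∧
    (N.block (m - r) Fs.card r (n - Fs.card) (by omega)
      (by have := ACIMatrix.card_le_n Fs; omega)).FCmR := by
  classical
  have hk : Fs.card ≤ n := ACIMatrix.card_le_n Fs
  obtain ⟨u, hu⟩ := hRu
  have hRR' : R * (↑u⁻¹ : Matrix (Fin m) (Fin m) K) = 1 := by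
    rw [← hu]; exact u.mul_inv
  have hR'R : (↑u⁻¹ : Matrix (Fin m) (Fin m) K) * R = 1 := by
    rw [← hu]; exact u.inv_mul
  obtain ⟨S, hSapp⟩ : ∃ S' : Matrix (Fin m) (Fin m) K, ∀ i l, S' i l = R i (τ l) :=
    ⟨fun i l => R i (τ l), fun _ _ => rfl⟩
  obtain ⟨T, hTapp⟩ : ∃ T' : Matrix (Fin m) (Fin m) K,
      ∀ i l, T' i l = (↑u⁻¹ : Matrix (Fin m) (Fin m) K) (τ i) l :=
    ⟨fun i l => (↑u⁻¹ : Matrix (Fin m) (Fin m) K) (τ i) l, fun _ _ => rfl⟩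
  have hST : S * T = 1 := by
    ext i jj
    rw [Matrix.mul_apply]
    calc ∑ l, S i l * T l jj
        = ∑ l, R i (τ l) * (↑u⁻¹ : Matrix (Fin m) (Fin m) K) (τ l) jj :=
          Finset.sum_congr rfl fun l _ => by rw [hSapp, hTapp]
      _ = ∑ l, R i l * (↑u⁻¹ : Matrix (Fin m) (Fin m) K) l jj :=
          Equiv.sum_comp τ (fun x => R i x * (↑u⁻¹ : Matrix (Fin m) (Fin m) K) x jj)
      _ = (R * (↑u⁻¹ : Matrix (Fin m) (Fin m) K)) i jj := (Matrix.mul_apply).symm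
      _ = (1 : Matrix (Fin m) (Fin m) K) i jj := by rw [hRR']
  have hTS : T * S = 1 := by
    ext i jj
    rw [Matrix.mul_apply]
    have h1 : ∑ l, T i l * S l jj
        = ∑ l, (↑u⁻¹ : Matrix (Fin m) (Fin m) K) (τ i) l * R l (τ jj) :=
      Finset.sum_congr rfl fun l _ => by rw [hSapp, hTapp]
    rw [h1, ← Matrix.mul_apply, hR'R]
    simp [Matrix.one_apply, EmbeddingLike.apply_eq_iff_eq]
  have hSu : IsUnit S := ⟨⟨S, T, hST, hTS⟩, rfl⟩
  have hTu : IsUnit T := ⟨⟨T, S, hTS, hST⟩, rfl⟩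
  obtain ⟨π, hπdef⟩ : ∃ π' : Equiv.Perm (Fin n), π' = σ'.symm.trans σ := ⟨_, rfl⟩
  have hπapp : ∀ j, π j = σ (σ'.symm j) := fun j => by rw [hπdef]; rfl
  have hπsymmapp : ∀ j, π.symm j = σ' (σ.symm j) := fun j => by rw [hπdef]; rfl
  have hπ : ∀ j : Fin n, (π j).val < Fs.card ↔ j.val < Fs.card := by
    intro j
    rw [hπapp]
    constructor
    · intro h
      have h1 : σ'.symm j ∈ Fs := (hσ (σ'.symm j)).mpr h
      have h2 := (hσ' (σ'.symm j)).mp h1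
      rwa [Equiv.apply_symm_apply] at h2
    · intro h
      refine (hσ (σ'.symm j)).mp ((hσ' (σ'.symm j)).mpr ?_)
      rwa [Equiv.apply_symm_apply]
  have hπ' : ∀ j : Fin n, (π.symm j).val < Fs.card ↔ j.val < Fs.card := by
    intro j
    have h1 := hπ (π.symm j)
    rw [Equiv.apply_symm_apply] at h1
    exact h1.symm
  have hMN : ∀ (l : Fin m) (c : Fin n), M.entry l c = N.entry (τ.symm l) (σ c) := by
    intro l c
    rw [hN]
    simp [Matrix.submatrix_apply]
  have hrel : ∀ i j, N'.entry i j = ∑ l, MvPolynomial.C (S i l) * N.entry l (π j) := by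
    intro i j
    rw [hN']
    change ∑ l, (R.map MvPolynomial.C) i l * M.entry l (σ'.symm j) = _
    calc ∑ l, (R.map MvPolynomial.C) i l * M.entry l (σ'.symm j)
        = ∑ l, MvPolynomial.C (R i l) * N.entry (τ.symm l) (π j) := by
          refine Finset.sum_congr rfl fun l _ => ?_
          rw [Matrix.map_apply, hMN l (σ'.symm j), hπapp]
      _ = ∑ l, MvPolynomial.C (R i (τ l)) * N.entry (τ.symm (τ l)) (π j) :=
          (Equiv.sum_comp τ (fun x => MvPolynomial.C (R i x) * N.entry (τ.symm x) (π j))).symm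
      _ = ∑ l, MvPolynomial.C (S i l) * N.entry l (π j) := by
          refine Finset.sum_congr rfl fun l _ => ?_
          rw [hSapp, Equiv.symm_apply_apply]
  have hrel' : ∀ i j, N.entry i j = ∑ l, MvPolynomial.C (T i l) * N'.entry l (π.symm j) := by
    intro i j
    have step : ∀ l, N'.entry l (π.symm j) = ∑ l', MvPolynomial.C (S l l') * N.entry l' j := by
      intro l
      rw [hrel l (π.symm j)]
      exact Finset.sum_congr rfl fun l' _ => by rw [Equiv.apply_symm_apply]
    have hcalc : ∑ l, MvPolynomial.C (T i l) * N'.entry l (π.symm j) = N.entry i j := by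
      calc ∑ l, MvPolynomial.C (T i l) * N'.entry l (π.symm j)
          = ∑ l, ∑ l', MvPolynomial.C (T i l) * (MvPolynomial.C (S l l') * N.entry l' j) :=
            Finset.sum_congr rfl fun l _ => by rw [step l, Finset.mul_sum]
        _ = ∑ l', MvPolynomial.C ((T * S) i l') * N.entry l' j := by
            rw [Finset.sum_comm]
            refine Finset.sum_congr rfl fun l' _ => ?_
            rw [Matrix.mul_apply, map_sum, Finset.sum_mul]
            exact Finset.sum_congr rfl fun l _ => by rw [map_mul, mul_assoc]
        _ = N.entry i j := by
            rw [hTS]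
            simp [Matrix.one_apply, apply_ite (fun c : K => (MvPolynomial.C c : MvPolynomial ι K)),
              ite_mul]
    exact hcalc.symm
  have hS0 : ∀ i l : Fin m, m - r' ≤ i.val → l.val < m - r → S i l = 0 :=
    core_zero hk hr hr' N N' S π hπ hrel hz hz' hA
  have hA'li : LinearIndependent K (fun a : Fin (m - r') => fun b : Fin Fs.card =>
      N'.entry ⟨a.val, by omega⟩ ⟨b.val, by omega⟩) := by
    have h1 := FRmR_rows_li _ hFR'
    have heq : (fun (a : Fin (m - r')) (b : Fin Fs.card) =>
        (N'.block 0 0 (m - r') Fs.card (by omega)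
          (by have := ACIMatrix.card_le_n Fs; omega)).entry a b)
        = fun (a : Fin (m - r')) (b : Fin Fs.card) =>
          N'.entry ⟨a.val, by omega⟩ ⟨b.val, by omega⟩ := by
      funext a b
      rw [block_entry, mk_zero_add, mk_zero_add]
    rw [heq] at h1
    exact h1
  have hT0 : ∀ i l : Fin m, m - r ≤ i.val → l.val < m - r' → T i l = 0 :=
    core_zero hk hr' hr N' N T π.symm hπ' hrel' hz' hz hA'li
  have hle1 : r' + (m - r) ≤ m := unit_zero_block S hSu hr' (by omega) hS0
  have hle2 : r + (m - r') ≤ m := unit_zero_block T hTu hr (by omega) hT0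
  have hrr : r = r' := by omega
  subst hrr
  refine ⟨rfl, ?_, ?_⟩
  -- column permutation on the first block
  all_goals {
    have hmem1 : ∀ b : Fin Fs.card, (π ⟨b.val, by omega⟩).val < Fs.card :=
      fun b => (hπ ⟨b.val, by omega⟩).mpr b.isLt
    obtain ⟨f1, hf1⟩ : ∃ f1 : Fin Fs.card → Fin Fs.card,
        ∀ b, (f1 b).val = (π ⟨b.val, by omega⟩).val :=
      ⟨fun b => ⟨(π ⟨b.val, by omega⟩).val, hmem1 b⟩, fun b => rfl⟩
    have hf1inj : Function.Injective f1 := by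
      intro a b hab
      have h2 : (π ⟨a.val, by omega⟩).val = (π ⟨b.val, by omega⟩).val := by
        rw [← hf1 a, ← hf1 b, hab]
      have h3 : (⟨a.val, by omega⟩ : Fin n) = ⟨b.val, by omega⟩ := π.injective (Fin.ext h2)
      have h4 := congrArg Fin.val h3
      exact Fin.ext h4
    obtain ⟨ρ1, hρ1⟩ : ∃ ρ1 : Equiv.Perm (Fin Fs.card), ∀ b, ρ1 b = f1 b :=
      ⟨Equiv.ofBijective f1 (Finite.injective_iff_bijective.mp hf1inj), fun b => rfl⟩
    have hmem2 : ∀ b : Fin (n - Fs.card), Fs.card ≤ (π ⟨Fs.card + b.val, by omega⟩).val := by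
      intro b
      by_contra hlt
      push_neg at hlt
      have h1 := (hπ ⟨Fs.card + b.val, by omega⟩).mp hlt
      have h2 : Fs.card + b.val < Fs.card := h1
      omega
    obtain ⟨f2, hf2⟩ : ∃ f2 : Fin (n - Fs.card) → Fin (n - Fs.card),
        ∀ b, (f2 b).val = (π ⟨Fs.card + b.val, by omega⟩).val - Fs.card :=
      ⟨fun b => ⟨(π ⟨Fs.card + b.val, by omega⟩).val - Fs.card, by
        have h1 := hmem2 b
        have h2 := (π ⟨Fs.card + b.val, by omega⟩).isLt
        omega⟩, fun b => rfl⟩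
    have hf2inj : Function.Injective f2 := by
      intro a b hab
      have h2 : (π ⟨Fs.card + a.val, by omega⟩).val - Fs.card
          = (π ⟨Fs.card + b.val, by omega⟩).val - Fs.card := by
        rw [← hf2 a, ← hf2 b, hab]
      have ha := hmem2 a
      have hb := hmem2 b
      have h3 : (π ⟨Fs.card + a.val, by omega⟩).val = (π ⟨Fs.card + b.val, by omega⟩).val := by
        omega
      have h4 := π.injective (Fin.ext h3)
      have h5 := congrArg Fin.val h4
      have h6 : Fs.card + a.val = Fs.card + b.val := h5
      exact Fin.ext (show a.val = b.val by omega)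
    obtain ⟨ρ2, hρ2⟩ : ∃ ρ2 : Equiv.Perm (Fin (n - Fs.card)), ∀ b, ρ2 b = f2 b :=
      ⟨Equiv.ofBijective f2 (Finite.injective_iff_bijective.mp hf2inj), fun b => rfl⟩
    have hkb : ∀ b : Fin (n - Fs.card),
        π ⟨Fs.card + b.val, by omega⟩ = ⟨Fs.card + (f2 b).val, by omega⟩ := by
      intro b
      have h1 := hmem2 b
      refine Fin.ext (show (π ⟨Fs.card + b.val, by omega⟩).val = Fs.card + (f2 b).val from ?_)
      rw [hf2 b]
      omega
    obtain ⟨S11, hS11⟩ : ∃ S11 : Matrix (Fin (m - r)) (Fin (m - r)) K,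
        ∀ a b, S11 a b = S ⟨a.val, by omega⟩ ⟨b.val, by omega⟩ :=
      ⟨fun a b => S ⟨a.val, by omega⟩ ⟨b.val, by omega⟩, fun _ _ => rfl⟩
    obtain ⟨T11, hT11⟩ : ∃ T11 : Matrix (Fin (m - r)) (Fin (m - r)) K,
        ∀ a b, T11 a b = T ⟨a.val, by omega⟩ ⟨b.val, by omega⟩ :=
      ⟨fun a b => T ⟨a.val, by omega⟩ ⟨b.val, by omega⟩, fun _ _ => rfl⟩
    obtain ⟨S22, hS22⟩ : ∃ S22 : Matrix (Fin r) (Fin r) K,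
        ∀ a b, S22 a b = S ⟨m - r + a.val, by omega⟩ ⟨m - r + b.val, by omega⟩ :=
      ⟨fun a b => S ⟨m - r + a.val, by omega⟩ ⟨m - r + b.val, by omega⟩, fun _ _ => rfl⟩
    obtain ⟨T22, hT22⟩ : ∃ T22 : Matrix (Fin r) (Fin r) K,
        ∀ a b, T22 a b = T ⟨m - r + a.val, by omega⟩ ⟨m - r + b.val, by omega⟩ :=
      ⟨fun a b => T ⟨m - r + a.val, by omega⟩ ⟨m - r + b.val, by omega⟩, fun _ _ => rfl⟩
    have hiff1 : ∀ a b : Fin (m - r),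
        ((⟨a.val, by omega⟩ : Fin m) = ⟨b.val, by omega⟩) ↔ a = b := by
      intro a b
      constructor
      · intro h
        have h2 := congrArg Fin.val h
        exact Fin.ext h2
      · intro h; rw [h]
    have hiff2 : ∀ a b : Fin r,
        ((⟨m - r + a.val, by omega⟩ : Fin m) = ⟨m - r + b.val, by omega⟩) ↔ a = b := by
      intro a b
      constructor
      · intro h
        have h2 := congrArg Fin.val h
        have h3 : m - r + a.val = m - r + b.val := h2
        exact Fin.ext (show a.val = b.val by omega)
      · intro h; rw [h]
    have hS11T11 : S11 * T11 = 1 := by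
      ext a b
      rw [Matrix.mul_apply]
      have hzero : ∀ x : Fin r, S ⟨a.val, by omega⟩ ⟨m - r + x.val, by omega⟩ *
          T ⟨m - r + x.val, by omega⟩ ⟨b.val, by omega⟩ = 0 := fun x => by
        rw [hT0 ⟨m - r + x.val, by omega⟩ ⟨b.val, by omega⟩
          (show m - r ≤ m - r + x.val by omega) b.isLt, mul_zero]
      have hmain : ∑ x : Fin (m - r), S11 a x * T11 x b
          = (S * T) ⟨a.val, by omega⟩ ⟨b.val, by omega⟩ := by
        rw [Matrix.mul_apply, sum_split (show (m - r) + r = m from by omega)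
          (fun l => S ⟨a.val, by omega⟩ l * T l ⟨b.val, by omega⟩)]
        rw [Finset.sum_congr rfl (fun x _ => hzero x), Finset.sum_const_zero, add_zero]
        exact Finset.sum_congr rfl fun x _ => by rw [hS11, hT11]
      rw [hmain, hST]
      simp only [Matrix.one_apply]
      rw [if_congr (hiff1 a b) rfl rfl]
    have hT11S11 : T11 * S11 = 1 := by
      ext a b
      rw [Matrix.mul_apply]
      have hzero : ∀ x : Fin r, T ⟨a.val, by omega⟩ ⟨m - r + x.val, by omega⟩ *
          S ⟨m - r + x.val, by omega⟩ ⟨b.val, by omega⟩ = 0 := fun x => by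
        rw [hS0 ⟨m - r + x.val, by omega⟩ ⟨b.val, by omega⟩
          (show m - r ≤ m - r + x.val by omega) b.isLt, mul_zero]
      have hmain : ∑ x : Fin (m - r), T11 a x * S11 x b
          = (T * S) ⟨a.val, by omega⟩ ⟨b.val, by omega⟩ := by
        rw [Matrix.mul_apply, sum_split (show (m - r) + r = m from by omega)
          (fun l => T ⟨a.val, by omega⟩ l * S l ⟨b.val, by omega⟩)]
        rw [Finset.sum_congr rfl (fun x _ => hzero x), Finset.sum_const_zero, add_zero]
        exact Finset.sum_congr rfl fun x _ => by rw [hS11, hT11]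
      rw [hmain, hTS]
      simp only [Matrix.one_apply]
      rw [if_congr (hiff1 a b) rfl rfl]
    have hS22T22 : S22 * T22 = 1 := by
      ext a b
      rw [Matrix.mul_apply]
      have hzero : ∀ x : Fin (m - r), S ⟨m - r + a.val, by omega⟩ ⟨x.val, by omega⟩ *
          T ⟨x.val, by omega⟩ ⟨m - r + b.val, by omega⟩ = 0 := fun x => by
        rw [hS0 ⟨m - r + a.val, by omega⟩ ⟨x.val, by omega⟩
          (show m - r ≤ m - r + a.val by omega) x.isLt, zero_mul]
      have hmain : ∑ x : Fin r, S22 a x * T22 x b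
          = (S * T) ⟨m - r + a.val, by omega⟩ ⟨m - r + b.val, by omega⟩ := by
        rw [Matrix.mul_apply, sum_split (show (m - r) + r = m from by omega)
          (fun l => S ⟨m - r + a.val, by omega⟩ l * T l ⟨m - r + b.val, by omega⟩)]
        rw [Finset.sum_congr rfl (fun x _ => hzero x), Finset.sum_const_zero, zero_add]
        exact Finset.sum_congr rfl fun x _ => by rw [hS22, hT22]
      rw [hmain, hST]
      simp only [Matrix.one_apply]
      rw [if_congr (hiff2 a b) rfl rfl]
    have hT22S22 : T22 * S22 = 1 := by
      ext a b
      rw [Matrix.mul_apply]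
      have hzero : ∀ x : Fin (m - r), T ⟨m - r + a.val, by omega⟩ ⟨x.val, by omega⟩ *
          S ⟨x.val, by omega⟩ ⟨m - r + b.val, by omega⟩ = 0 := fun x => by
        rw [hT0 ⟨m - r + a.val, by omega⟩ ⟨x.val, by omega⟩
          (show m - r ≤ m - r + a.val by omega) x.isLt, zero_mul]
      have hmain : ∑ x : Fin r, T22 a x * S22 x b
          = (T * S) ⟨m - r + a.val, by omega⟩ ⟨m - r + b.val, by omega⟩ := by
        rw [Matrix.mul_apply, sum_split (show (m - r) + r = m from by omega)
          (fun l => T ⟨m - r + a.val, by omega⟩ l * S l ⟨m - r + b.val, by omega⟩)]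
        rw [Finset.sum_congr rfl (fun x _ => hzero x), Finset.sum_const_zero, zero_add]
        exact Finset.sum_congr rfl fun x _ => by rw [hS22, hT22]
      rw [hmain, hTS]
      simp only [Matrix.one_apply]
      rw [if_congr (hiff2 a b) rfl rfl]
    have hS11u : IsUnit S11 := ⟨⟨S11, T11, hS11T11, hT11S11⟩, rfl⟩
    have hS22u : IsUnit S22 := ⟨⟨S22, T22, hS22T22, hT22S22⟩, rfl⟩
    have hblockA : ∀ (a : Fin (m - r)) (b : Fin Fs.card),
        (N'.block 0 0 (m - r) Fs.card (by omega)
          (by have := ACIMatrix.card_le_n Fs; omega)).entry a b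
          = ∑ x, MvPolynomial.C (S11 a x) *
            (N.block 0 0 (m - r) Fs.card (by omega)
              (by have := ACIMatrix.card_le_n Fs; omega)).entry x (ρ1 b) := by
      intro a b
      rw [block_entry, mk_zero_add, mk_zero_add, hrel]
      rw [sum_split (show (m - r) + r = m from by omega)
        (fun l => MvPolynomial.C (S ⟨a.val, by omega⟩ l) * N.entry l (π ⟨b.val, by omega⟩))]
      have hzero : ∀ x : Fin r,
          MvPolynomial.C (S ⟨a.val, by omega⟩ ⟨m - r + x.val, by omega⟩) *
            N.entry ⟨m - r + x.val, by omega⟩ (π ⟨b.val, by omega⟩) = 0 := fun x => by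
        rw [hz ⟨m - r + x.val, by omega⟩ (π ⟨b.val, by omega⟩)
          (show m - r ≤ m - r + x.val by omega) (hmem1 b), mul_zero]
      rw [Finset.sum_congr rfl (fun x _ => hzero x), Finset.sum_const_zero, add_zero]
      refine Finset.sum_congr rfl fun x _ => ?_
      have hπb : π ⟨b.val, by omega⟩ = (⟨(f1 b).val, by omega⟩ : Fin n) :=
        Fin.ext (hf1 b).symm
      rw [hS11, hρ1, block_entry, mk_zero_add, mk_zero_add, hπb]
    have hblockC : ∀ (a : Fin r) (b : Fin (n - Fs.card)),
        (N'.block (m - r) Fs.card r (n - Fs.card) (by omega)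
          (by have := ACIMatrix.card_le_n Fs; omega)).entry a b
          = ∑ x, MvPolynomial.C (S22 a x) *
            (N.block (m - r) Fs.card r (n - Fs.card) (by omega)
              (by have := ACIMatrix.card_le_n Fs; omega)).entry x (ρ2 b) := by
      intro a b
      rw [block_entry, hrel]
      rw [sum_split (show (m - r) + r = m from by omega)
        (fun l => MvPolynomial.C (S ⟨m - r + a.val, by omega⟩ l) *
          N.entry l (π ⟨Fs.card + b.val, by omega⟩))]
      have hzero : ∀ x : Fin (m - r),
          MvPolynomial.C (S ⟨m - r + a.val, by omega⟩ ⟨x.val, by omega⟩) *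
            N.entry ⟨x.val, by omega⟩ (π ⟨Fs.card + b.val, by omega⟩) = 0 := fun x => by
        rw [hS0 ⟨m - r + a.val, by omega⟩ ⟨x.val, by omega⟩
          (show m - r ≤ m - r + a.val by omega) x.isLt, map_zero, zero_mul]
      rw [Finset.sum_congr rfl (fun x _ => hzero x), Finset.sum_const_zero, zero_add]
      refine Finset.sum_congr rfl fun x _ => ?_
      rw [hS22, hρ2, block_entry, hkb b]
    first
      | (exact ((maxRank_transfer _ _ S11 hS11u ρ1 hblockA).symm.trans hFR' :
          (N.block 0 0 (m - r) Fs.card (by omega)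
            (by have := ACIMatrix.card_le_n Fs; omega)).maxRank = m - r))
      | (exact ((maxRank_transfer _ _ S22 hS22u ρ2 hblockC).symm.trans hFC' :
          (N.block (m - r) Fs.card r (n - Fs.card) (by omega)
            (by have := ACIMatrix.card_le_n Fs; omega)).maxRank = n - Fs.card))
  }

end Helpers


/-- if `Fs` is a factor (resp. semifactor) set of `M` and
`P M Q_Fs = [[A',B'],[0,C']]` is a block decomposition with the same column split in which
`P` is a row permutation and `A'` has linearly independent rows, then this decomposition is
an `Fs`-decomposition (resp. `Fs`-semidecomposition): the zero block is Big (resp. Medium),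
`A'` is FRmR and `C'` is FCmR. -/
theorem sweep_gives_decomposition {K : Type} [Field K] {ι : Type} {m n : ℕ}
    (M : ACIMatrix K ι m n) (Fs : Finset (Fin n))
    (τ : Equiv.Perm (Fin m)) (σ : Equiv.Perm (Fin n)) (N : ACIMatrix K ι m n)
    (r : ℕ) (hr : r ≤ m)
    (hσ : ∀ j : Fin n, j ∈ Fs ↔ (σ j).val < Fs.card)
    (hN : N.entry = M.entry.submatrix ⇑τ ⇑σ.symm)
    (hz : ∀ (i : Fin m) (j : Fin n), m - r ≤ i.val → j.val < Fs.card → N.entry i j = 0)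
    (hA : LinearIndependent K (fun i : Fin (m - r) => fun j : Fin Fs.card =>
      (N.block 0 0 (m - r) Fs.card (by omega)
        (by have := ACIMatrix.card_le_n Fs; omega)).entry i j)) :
    (M.IsFactorSet Fs →
      r + Fs.card > max m n ∧
      (N.block 0 0 (m - r) Fs.card (by omega)
        (by have := ACIMatrix.card_le_n Fs; omega)).FRmR ∧
      (N.block (m - r) Fs.card r (n - Fs.card) (by omega)
        (by have := ACIMatrix.card_le_n Fs; omega)).FCmR) ∧
    (M.IsSemifactorSet Fs →
      r + Fs.card = max m n ∧
      (N.block 0 0 (m - r) Fs.card (by omega)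
        (by have := ACIMatrix.card_le_n Fs; omega)).FRmR ∧
      (N.block (m - r) Fs.card r (n - Fs.card) (by omega)
        (by have := ACIMatrix.card_le_n Fs; omega)).FCmR) := by
  have hk : Fs.card ≤ n := ACIMatrix.card_le_n Fs
  have hA2 : LinearIndependent K (fun a : Fin (m - r) => fun b : Fin Fs.card =>
      N.entry ⟨a.val, by omega⟩ ⟨b.val, by omega⟩) := by
    have heq : (fun (i : Fin (m - r)) (j : Fin Fs.card) =>
        (N.block 0 0 (m - r) Fs.card (by omega)
          (by have := ACIMatrix.card_le_n Fs; omega)).entry i j)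
        = fun (a : Fin (m - r)) (b : Fin Fs.card) =>
          N.entry ⟨a.val, by omega⟩ ⟨b.val, by omega⟩ := by
      funext a b
      rw [block_entry, mk_zero_add, mk_zero_add]
    rw [heq] at hA
    exact hA
  constructor
  · rintro ⟨R, σ', N', r', hr', hRu, hσ', hN', hz', hbig, hFR', hFC'⟩
    obtain ⟨hrr, h1, h2⟩ := main_core hr hσ hN hz hA2 hr' hRu hσ' hN' hz' hFR' hFC'
    exact ⟨by omega, h1, h2⟩
  · rintro ⟨R, σ', N', r', hr', hRu, hσ', hN', hz', hmed, hFR', hFC'⟩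
    obtain ⟨hrr, h1, h2⟩ := main_core hr hσ hN hz hA2 hr' hRu hσ' hN' hz' hFR' hFC'
    exact ⟨by omega, h1, h2⟩
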